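/- Let F : P₂(ℝ^d) → ℝ be convex (F((1−t)μ + tρ) ≤ (1−t)F(μ) + tF(ρ) for all μ, ρ ∈ P₂(ℝ^d), t ∈ [0,1]) and suppose F admits a minimizer μ* ∈ P₂(ℝ^d) and admits a derivative δ at μ*. If δ : ℝ^d → ℝ is differentiable, then ∇δ(x) = 0 for every x in the support of μ*; in particular ∇δ(x) = 0 for μ*-almost every x, i.e. μ* is a critical point of F. -/

import Mathlib

open MeasureTheory ENNReal Filter
open scoped Topology

/-- `μ ∈ P₂(ℝ^d)`: a Borel probability measure with finite second moment. -/
def MemP2 {d : ℕ} (μ : Measure (EuclideanSpace ℝ (Fin d))) : Prop :=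
  IsProbabilityMeasure μ ∧ Integrable (fun x => ‖x‖ ^ 2) μ

/-- The (topological) support of a measure: points all of whose open neighbourhoods have
nonzero measure. -/
def msupport {d : ℕ} (μ : Measure (EuclideanSpace ℝ (Fin d))) :
    Set (EuclideanSpace ℝ (Fin d)) :=
  {x | ∀ U : Set (EuclideanSpace ℝ (Fin d)), IsOpen U → x ∈ U → μ U ≠ 0}

lemma integrable_dirac_of_continuous {d : ℕ} {f : EuclideanSpace ℝ (Fin d) → ℝ}
    (hf : Continuous f) (a : EuclideanSpace ℝ (Fin d)) :
    Integrable f (Measure.dirac a) := by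
  refine ⟨hf.aestronglyMeasurable, ?_⟩
  simp [HasFiniteIntegral, lintegral_dirac]

lemma memP2_dirac {d : ℕ} (a : EuclideanSpace ℝ (Fin d)) :
    MemP2 (Measure.dirac a) :=
  ⟨inferInstance, integrable_dirac_of_continuous (by continuity) a⟩

lemma memP2_mix {d : ℕ} {μ ρ : Measure (EuclideanSpace ℝ (Fin d))}
    (hμ : MemP2 μ) (hρ : MemP2 ρ) {t : ℝ} (ht : 0 ≤ t) (ht1 : t ≤ 1) :
    MemP2 (ENNReal.ofReal (1 - t) • μ + ENNReal.ofReal t • ρ) := by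
  obtain ⟨hμp, hμi⟩ := hμ
  obtain ⟨hρp, hρi⟩ := hρ
  constructor
  · constructor
    rw [Measure.add_apply, Measure.smul_apply, Measure.smul_apply, measure_univ,
      measure_univ, smul_eq_mul, smul_eq_mul, mul_one, mul_one,
      ← ENNReal.ofReal_add (by linarith) ht]
    norm_num
  · exact (hμi.smul_measure ENNReal.ofReal_ne_top).add_measure
      (hρi.smul_measure ENNReal.ofReal_ne_top)

theorem minimizer_is_critical_point
    {d : ℕ} (F : Measure (EuclideanSpace ℝ (Fin d)) → ℝ)
    (hconv : ∀ μ ρ : Measure (EuclideanSpace ℝ (Fin d)), MemP2 μ → MemP2 ρ →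
      ∀ t : ℝ, 0 ≤ t → t ≤ 1 →
        F (ENNReal.ofReal (1 - t) • μ + ENNReal.ofReal t • ρ)
          ≤ (1 - t) * F μ + t * F ρ)
    (μstar : Measure (EuclideanSpace ℝ (Fin d))) (hμstar : MemP2 μstar)
    (hmin : ∀ μ, MemP2 μ → F μstar ≤ F μ)
    (δ : EuclideanSpace ℝ (Fin d) → ℝ) (hδcont : Continuous δ)
    (hδint : Integrable δ μstar) (hδint' : ∀ ρ, MemP2 ρ → Integrable δ ρ)
    (hderiv : ∀ ρ : Measure (EuclideanSpace ℝ (Fin d)), MemP2 ρ →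
      Tendsto
        (fun t : ℝ =>
          (F (ENNReal.ofReal (1 - t) • μstar + ENNReal.ofReal t • ρ) - F μstar) / t)
        (𝓝[>] (0 : ℝ)) (𝓝 ((∫ x, δ x ∂ρ) - ∫ x, δ x ∂μstar)))
    (hδdiff : ∀ x, DifferentiableAt ℝ δ x) :
    (∀ x ∈ msupport μstar, gradient δ x = 0) ∧ ∀ᵐ x ∂μstar, gradient δ x = 0 := by
  set c : ℝ := ∫ x, δ x ∂μstar with hc
  -- Step 1: for every ρ ∈ P₂, c ≤ ∫ δ dρ.
  have key : ∀ ρ : Measure (EuclideanSpace ℝ (Fin d)), MemP2 ρ → c ≤ ∫ x, δ x ∂ρ := by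
    intro ρ hρ
    have h0 : (0 : ℝ) ≤ (∫ x, δ x ∂ρ) - c := by
      refine ge_of_tendsto (hderiv ρ hρ) ?_
      filter_upwards [Ioc_mem_nhdsGT_of_mem (Set.left_mem_Ico.2 one_pos)] with t ht
      exact div_nonneg (sub_nonneg.2 (hmin _ (memP2_mix hμstar hρ ht.1.le ht.2))) ht.1.le
    linarith
  -- Step 2: δ y ≥ c for every y.
  have hglob : ∀ y, c ≤ δ y := by
    intro y
    have := key (Measure.dirac y) (memP2_dirac y)
    rwa [integral_dirac] at this
  -- Step 3: δ = c μstar-a.e.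
  have : IsProbabilityMeasure μstar := hμstar.1
  have hint : Integrable (fun x => δ x - c) μstar := hδint.sub (integrable_const c)
  have hizero : ∫ x, (δ x - c) ∂μstar = 0 := by
    rw [integral_sub hδint (integrable_const c), integral_const, probReal_univ]
    simp [hc]
  have hae : ∀ᵐ x ∂μstar, δ x = c := by
    have h := (integral_eq_zero_iff_of_nonneg
      (fun x => sub_nonneg.2 (hglob x)) hint).1 hizero
    filter_upwards [h] with x hx
    have : δ x - c = 0 := hx
    linarith
  -- gradient vanishes at any global min point
  have hgrad : ∀ x, δ x = c → gradient δ x = 0 := by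
    intro x hx
    have hlm : IsLocalMin δ x := by
      apply IsMinOn.isLocalMin (s := Set.univ)
      · intro y _
        rw [hx]; exact hglob y
      · exact Filter.univ_mem
    have hf : fderiv ℝ δ x = 0 := hlm.fderiv_eq_zero
    rw [gradient, hf]
    simp
  constructor
  · -- on the support, δ = c by continuity
    intro x hx
    apply hgrad
    by_contra hne
    have hlt : c < δ x := lt_of_le_of_ne (hglob x) (Ne.symm hne)
    set U := δ ⁻¹' Set.Ioi c with hU
    have hUopen : IsOpen U := isOpen_Ioi.preimage hδcont
    have hxU : x ∈ U := hlt
    have hnull : μstar U = 0 := by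
      have : U ⊆ {y | ¬ δ y = c} := fun y hy => ne_of_gt hy
      exact measure_mono_null this (ae_iff.1 hae)
    exact hx U hUopen hxU hnull
  · filter_upwards [hae] with x hx using hgrad x hx
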